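/- arXiv:2202.07187 — 2 statements merged into one kernel-verified Lean document; each statement's English description precedes it below -/
import Mathlib

section
/- Let P₂ ∈ ℝ^{n×(n−k)} and Q₂ ∈ ℝ^{n×(n−k)} have orthonormal columns and suppose σ_min(P₂ᵀQ₂) ≥ 1 − ξ for some ξ ∈ (0,1]. If moreover P₂ᵀQ₂ is diagonal with diagonal entries σ_i ≥ 1 − ξ (which can be arranged by choosing the bases given by the singular vectors), then ‖P₂ − Q₂‖ ≤ √(2ξ). -/
open scoped Matrix.Norms.L2Operator
open Matrix

/-- The smallest singular value of a (possibly rectangular) real matrix: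
the infimum of `‖M x‖` over unit vectors `x` (Euclidean norms). -/
noncomputable def sigmaMin {m n : ℕ} (M : Matrix (Fin m) (Fin n) ℝ) : ℝ :=
  sInf {r : ℝ | ∃ x : Fin n → ℝ,
    ‖(WithLp.equiv 2 (Fin n → ℝ)).symm x‖ = 1 ∧
    r = ‖(WithLp.equiv 2 (Fin m → ℝ)).symm (M *ᵥ x)‖}

lemma l2_opNorm_diagonal_le {m : ℕ} (d : Fin m → ℝ) (C : ℝ) (hC : 0 ≤ C)
    (hd : ∀ i, |d i| ≤ C) : ‖Matrix.diagonal d‖ ≤ C := by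
  rw [Matrix.l2_opNorm_def]
  refine ContinuousLinearMap.opNorm_le_bound _ hC fun x => ?_
  have hx : ∀ y : EuclideanSpace ℝ (Fin m), ‖y‖ = Real.sqrt (∑ i, y i ^ 2) := by
    intro y
    rw [EuclideanSpace.norm_eq]
    congr 1
    simp [sq_abs]
  simp only [LinearEquiv.trans_apply, LinearMap.coe_toContinuousLinearMap']
  rw [hx, hx]
  have : Real.sqrt (∑ i, (Matrix.toEuclideanLin (Matrix.diagonal d) x) i ^ 2)
      ≤ Real.sqrt (∑ i, C ^ 2 * x i ^ 2) := by
    apply Real.sqrt_le_sqrt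
    apply Finset.sum_le_sum
    intro i _
    have : (Matrix.toEuclideanLin (Matrix.diagonal d) x) i = d i * x i := by
      simp [Matrix.toEuclideanLin_apply, Matrix.mulVec_diagonal]
    rw [this, mul_pow]
    have h1 : d i ^ 2 ≤ C ^ 2 := by
      rw [← sq_abs]; exact pow_le_pow_left₀ (abs_nonneg _) (hd i) 2
    exact mul_le_mul_of_nonneg_right h1 (sq_nonneg _)
  refine this.trans ?_
  rw [← Finset.mul_sum, Real.sqrt_mul (by positivity), Real.sqrt_sq hC]

/-- If `P₂`, `Q₂` have orthonormal columns, `σ_min(P₂ᵀ Q₂) ≥ 1 - ξ`, and `P₂ᵀ Q₂` is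
diagonal with diagonal entries `σ_i ≥ 1 - ξ` for `ξ ∈ (0, 1]`, then `‖P₂ - Q₂‖ ≤ √(2ξ)`. -/
theorem norm_sub_le_of_close_subspaces {n m : ℕ}
    (P₂ Q₂ : Matrix (Fin n) (Fin m) ℝ) (ξ : ℝ) (hξ : ξ ∈ Set.Ioc (0 : ℝ) 1)
    (hP : P₂ᵀ * P₂ = 1) (hQ : Q₂ᵀ * Q₂ = 1)
    (hmin : 1 - ξ ≤ sigmaMin (P₂ᵀ * Q₂))
    (σ : Fin m → ℝ) (hdiag : P₂ᵀ * Q₂ = Matrix.diagonal σ)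
    (hσ : ∀ i, 1 - ξ ≤ σ i) :
    ‖P₂ - Q₂‖ ≤ Real.sqrt (2 * ξ) := by
  obtain ⟨hξ0, hξ1⟩ := hξ
  -- σ i ≤ 1 by Cauchy-Schwarz
  have hcolP : ∀ i, ∑ j, P₂ j i ^ 2 = 1 := by
    intro i
    have := congrFun (congrFun hP i) i
    simpa [Matrix.mul_apply, Matrix.one_apply, sq] using this
  have hcolQ : ∀ i, ∑ j, Q₂ j i ^ 2 = 1 := by
    intro i
    have := congrFun (congrFun hQ i) i
    simpa [Matrix.mul_apply, Matrix.one_apply, sq] using this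
  have hσ1 : ∀ i, σ i ≤ 1 := by
    intro i
    have hσi : σ i = ∑ j, P₂ j i * Q₂ j i := by
      have := congrFun (congrFun hdiag i) i
      simp [Matrix.mul_apply, Matrix.diagonal_apply_eq] at this
      rw [← this]
    rw [hσi]
    calc ∑ j, P₂ j i * Q₂ j i
        ≤ Real.sqrt (∑ j, P₂ j i ^ 2) * Real.sqrt (∑ j, Q₂ j i ^ 2) :=
          Real.sum_mul_le_sqrt_mul_sqrt _ _ _
      _ = 1 := by rw [hcolP, hcolQ]; simp
  -- (P-Q)ᵀ(P-Q) = diagonal (2 - 2σ)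
  have hQP : Q₂ᵀ * P₂ = Matrix.diagonal σ := by
    have : (P₂ᵀ * Q₂)ᵀ = Q₂ᵀ * P₂ := by
      rw [Matrix.transpose_mul, Matrix.transpose_transpose]
    rw [← this, hdiag, Matrix.diagonal_transpose]
  have key : (P₂ - Q₂)ᵀ * (P₂ - Q₂) = Matrix.diagonal (fun i => 2 - 2 * σ i) := by
    rw [Matrix.transpose_sub, Matrix.sub_mul, Matrix.mul_sub, Matrix.mul_sub,
      hP, hQ, hdiag, hQP]
    ext i j
    by_cases h : i = j <;> simp [h, Matrix.diagonal_apply, Matrix.one_apply]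
    · ring
  have hsq : ‖P₂ - Q₂‖ * ‖P₂ - Q₂‖ ≤ 2 * ξ := by
    rw [← Matrix.l2_opNorm_conjTranspose_mul_self]
    have : (P₂ - Q₂)ᴴ = (P₂ - Q₂)ᵀ := rfl
    rw [this, key]
    refine l2_opNorm_diagonal_le _ _ (by linarith) fun i => ?_
    rw [abs_le]
    constructor
    · have := hσ1 i; linarith
    · have := hσ i; linarith
  have h0 : 0 ≤ ‖P₂ - Q₂‖ := norm_nonneg _
  nlinarith [Real.sq_sqrt (by linarith : (0:ℝ) ≤ 2 * ξ), Real.sqrt_nonneg (2 * ξ)]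
end

section
/- (Bauer–Fike) If A ∈ ℂ^{n×n} is diagonalizable, A = SΛS⁻¹ with Λ diagonal, then for any E ∈ ℂ^{n×n} and any eigenvalue μ of A+E, there exists an eigenvalue λ of A with |μ − λ| ≤ κ(S)·‖E‖, where κ(S) = ‖S‖·‖S⁻¹‖. -/
open scoped Matrix.Norms.L2Operator
open Matrix

/-- Bauer–Fike: if `A = S Λ S⁻¹` is diagonalizable, then every eigenvalue `μ` of `A + E`
is within distance `κ(S) ‖E‖ = ‖S‖ ‖S⁻¹‖ ‖E‖` of some eigenvalue `λ` of `A`. -/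
theorem bauer_fike {n : ℕ} (A E S : Matrix (Fin n) (Fin n) ℂ) (d : Fin n → ℂ)
    (hS : IsUnit S) (hA : A = S * Matrix.diagonal d * S⁻¹) :
    ∀ μ ∈ spectrum ℂ (A + E), ∃ lam ∈ spectrum ℂ A,
      ‖μ - lam‖ ≤ ‖S‖ * ‖S⁻¹‖ * ‖E‖ := by
  intro μ hμ
  have hSd : IsUnit S.det := (Matrix.isUnit_iff_isUnit_det S).mp hS
  have hSS : S * S⁻¹ = 1 := Matrix.mul_nonsing_inv S hSd
  have hSS' : S⁻¹ * S = 1 := Matrix.nonsing_inv_mul S hSd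
  have hspec : spectrum ℂ A = Set.range d := by
    rw [hA, ← hS.unit_spec, ← Matrix.coe_units_inv, spectrum.units_conjugate,
      spectrum_diagonal]
  set N : Matrix (Fin n) (Fin n) ℂ := algebraMap ℂ (Matrix (Fin n) (Fin n) ℂ) μ with hN
  rw [spectrum.mem_iff] at hμ
  have hdet : (N - (A + E)).det = 0 := by
    by_contra h
    exact hμ ((Matrix.isUnit_iff_isUnit_det _).2 (isUnit_iff_ne_zero.2 h))
  obtain ⟨v, hv0, hv⟩ := Matrix.exists_mulVec_eq_zero_iff.2 hdet
  have key : N - A = S * (N - Matrix.diagonal d) * S⁻¹ := by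
    rw [hA, Matrix.mul_sub, Matrix.sub_mul]
    congr 1
    rw [← Algebra.commutes μ S, Matrix.mul_assoc, hSS, Matrix.mul_one]
  have h1 : (N - A) *ᵥ v = E *ᵥ v := by
    have : ((N - A) - E) *ᵥ v = 0 := by
      rw [sub_sub]; exact hv
    rw [Matrix.sub_mulVec] at this
    exact sub_eq_zero.mp this
  set w : Fin n → ℂ := S⁻¹ *ᵥ v with hwdef
  have hvw : S *ᵥ w = v := by
    rw [hwdef, Matrix.mulVec_mulVec, hSS, Matrix.one_mulVec]
  have hw0 : w ≠ 0 := fun h => hv0 (by rw [← hvw, h, Matrix.mulVec_zero])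
  have key2 : Matrix.diagonal (fun i => μ - d i) *ᵥ w = (S⁻¹ * E * S) *ᵥ w := by
    have hdiag : N - Matrix.diagonal d = Matrix.diagonal (fun i => μ - d i) := by
      rw [hN, Matrix.algebraMap_eq_diagonal, Matrix.diagonal_sub]
      congr 1
    rw [key] at h1
    have h2 := congrArg (fun u => S⁻¹ *ᵥ u) h1
    simp only [Matrix.mulVec_mulVec] at h2
    rw [← Matrix.mul_assoc, ← Matrix.mul_assoc, hSS'] at h2
    rw [Matrix.one_mul] at h2
    calc Matrix.diagonal (fun i => μ - d i) *ᵥ w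
        = ((N - Matrix.diagonal d) * S⁻¹) *ᵥ v := by
          rw [hdiag, hwdef, Matrix.mulVec_mulVec]
      _ = (S⁻¹ * E) *ᵥ v := h2
      _ = (S⁻¹ * E * S) *ᵥ w := by rw [← hvw, Matrix.mulVec_mulVec]
  have hne : Nonempty (Fin n) := by
    by_contra h
    exact hw0 (funext fun i => absurd ⟨i⟩ h)
  obtain ⟨i₀, -, hmin⟩ := Finset.exists_min_image Finset.univ (fun i => ‖μ - d i‖)
    Finset.univ_nonempty
  set x : EuclideanSpace ℂ (Fin n) := (EuclideanSpace.equiv (Fin n) ℂ).symm w with hx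
  have hub : ‖(EuclideanSpace.equiv (Fin n) ℂ).symm ((S⁻¹ * E * S) *ᵥ w)‖
      ≤ ‖S⁻¹ * E * S‖ * ‖x‖ := by
    have := Matrix.l2_opNorm_mulVec (S⁻¹ * E * S) x
    exact this
  have hlow : ‖μ - d i₀‖ * ‖x‖ ≤
      ‖(EuclideanSpace.equiv (Fin n) ℂ).symm (Matrix.diagonal (fun i => μ - d i) *ᵥ w)‖ := by
    rw [hx, EuclideanSpace.norm_eq, EuclideanSpace.norm_eq,
      show ‖μ - d i₀‖ = Real.sqrt (‖μ - d i₀‖ ^ 2) from (Real.sqrt_sq (norm_nonneg _)).symm,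
      ← Real.sqrt_mul (by positivity)]
    apply Real.sqrt_le_sqrt
    rw [Finset.mul_sum]
    apply Finset.sum_le_sum
    intro i _
    have happ : ∀ (u : Fin n → ℂ) (j : Fin n),
        ((EuclideanSpace.equiv (Fin n) ℂ).symm u) j = u j := fun _ _ => rfl
    rw [happ, happ, Matrix.mulVec_diagonal]
    rw [norm_mul, mul_pow]
    gcongr
    exact hmin i (Finset.mem_univ i)
  have hwpos : 0 < ‖x‖ := by
    rw [norm_pos_iff]
    simpa [hx] using hw0
  have hchain : ‖μ - d i₀‖ * ‖x‖ ≤ ‖S⁻¹ * E * S‖ * ‖x‖ := by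
    refine hlow.trans ?_
    rw [key2]
    exact hub
  have hm : ‖μ - d i₀‖ ≤ ‖S⁻¹ * E * S‖ := le_of_mul_le_mul_right hchain hwpos
  have hnorm : ‖S⁻¹ * E * S‖ ≤ ‖S⁻¹‖ * ‖E‖ * ‖S‖ :=
    le_trans (Matrix.l2_opNorm_mul _ _) (by gcongr; exact Matrix.l2_opNorm_mul _ _)
  refine ⟨d i₀, by rw [hspec]; exact ⟨i₀, rfl⟩, ?_⟩
  calc ‖μ - d i₀‖ ≤ ‖S⁻¹‖ * ‖E‖ * ‖S‖ := hm.trans hnorm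
    _ = ‖S‖ * ‖S⁻¹‖ * ‖E‖ := by ring
end
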